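/- For all positive integers α₁, α₂, the number of connected components of the bi-rainbow meander RM(α₁, α₂) equals gcd(α₁, α₂). -/

import Mathlib

/-- Upper-arc partner of point `k ∈ {1,…,2·sum}` in a meander whose upper arcs
form consecutive rainbow families of the given sizes (1-indexed points). -/
def upperPartner : List ℕ → ℕ → ℕ
  | [], k => k
  | a :: rest, k => if k ≤ 2 * a then 2 * a + 1 - k else 2 * a + upperPartner rest (k - 2 * a)

/-- One step along the bi-rainbow meander: upper or lower partner. -/
def meanderRel (l : List ℕ) (x y : ℕ) : Prop :=
  y = upperPartner l x ∨ y = 2 * l.sum + 1 - x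

/-- Connectivity relation on the points `{1,…,2α}` of the bi-rainbow meander `RM l`. -/
def meanderSetoid (l : List ℕ) : Setoid {k : ℕ // 1 ≤ k ∧ k ≤ 2 * l.sum} :=
  ⟨fun a b => Relation.EqvGen (fun a b => meanderRel l a.1 b.1) a b,
    Relation.EqvGen.is_equivalence _⟩

/-- Number of connected components (Jordan curves) of the bi-rainbow meander `RM l`. -/
noncomputable def Z (l : List ℕ) : ℕ := Nat.card (Quotient (meanderSetoid l))

section Aux

variable (a b : ℕ)

/-- the corresponding relation on `ZMod (2*(a+b))` -/
def ztR (x y : ZMod (2*(a+b))) : Prop :=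
  y = ((2*a+1 : ℕ) : ZMod (2*(a+b))) - x ∨ y = 1 - x

lemma zt_up_def (k : ℕ) (hk : 2*a < k) (hk2 : k ≤ 2*(a+b)) :
    upperPartner [a, b] k = 2*a + (2*b + 1 - (k - 2*a)) := by
  simp only [upperPartner, if_neg (by omega : ¬ k ≤ 2*a), if_pos (by omega : k - 2*a ≤ 2*b)]

lemma zt_up_mem (k : ℕ) (h1 : 1 ≤ k) (h2 : k ≤ 2*(a+b)) :
    1 ≤ upperPartner [a,b] k ∧ upperPartner [a,b] k ≤ 2*(a+b) := by
  by_cases h : k ≤ 2*a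
  · simp only [upperPartner, if_pos h]; omega
  · rw [zt_up_def a b k (by omega) h2]; omega

lemma zt_up_cast (k : ℕ) (h1 : 1 ≤ k) (h2 : k ≤ 2*(a+b)) :
    ((upperPartner [a,b] k : ℕ) : ZMod (2*(a+b)))
      = ((2*a+1:ℕ) : ZMod (2*(a+b))) - (k : ZMod (2*(a+b))) := by
  have hn : ((2*(a+b) : ℕ) : ZMod (2*(a+b))) = 0 := ZMod.natCast_self _
  by_cases h : k ≤ 2*a
  · simp only [upperPartner, if_pos h]
    exact Nat.cast_sub (by omega)
  · rw [zt_up_def a b k (by omega) h2,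
      Nat.cast_add, Nat.cast_sub (by omega : k - 2*a ≤ 2*b+1), Nat.cast_sub (by omega : 2*a ≤ k)]
    push_cast at hn ⊢
    linear_combination hn

lemma zt_low_cast (k : ℕ) (h2 : k ≤ 2*(a+b)) :
    ((2*(a+b)+1-k : ℕ) : ZMod (2*(a+b))) = 1 - (k : ZMod (2*(a+b))) := by
  have hn : ((2*(a+b) : ℕ) : ZMod (2*(a+b))) = 0 := ZMod.natCast_self _
  rw [Nat.cast_sub (by omega)]
  push_cast at hn ⊢
  linear_combination hn

lemma zt_cast_inj {n : ℕ} {j k : ℕ} (hj1 : 1 ≤ j) (hj2 : j ≤ n) (hk1 : 1 ≤ k) (hk2 : k ≤ n)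
    (h : (j : ZMod n) = k) : j = k := by
  have h'' : j % n = k % n := (ZMod.natCast_eq_natCast_iff _ _ _).mp h
  rcases Nat.lt_or_ge j n with hjn | hjn
  · rw [Nat.mod_eq_of_lt hjn] at h''
    rcases Nat.lt_or_ge k n with hkn | hkn
    · rw [Nat.mod_eq_of_lt hkn] at h''; exact h''
    · have hkn' : k = n := le_antisymm hk2 hkn
      rw [hkn', Nat.mod_self] at h''; omega
  · have hjn' : j = n := le_antisymm hj2 hjn
    rw [hjn', Nat.mod_self] at h''
    rcases Nat.lt_or_ge k n with hkn | hkn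
    · rw [Nat.mod_eq_of_lt hkn] at h''; omega
    · omega

lemma zt_rel_iff (x y : ℕ) (hx1 : 1 ≤ x) (hx2 : x ≤ 2*(a+b)) (hy1 : 1 ≤ y) (hy2 : y ≤ 2*(a+b)) :
    meanderRel [a,b] x y ↔ ztR a b x y := by
  have hsum : ([a,b] : List ℕ).sum = a + b := by simp
  constructor
  · rintro (rfl | rfl)
    · exact Or.inl (zt_up_cast a b x hx1 hx2)
    · refine Or.inr ?_
      have h : 2 * ([a,b] : List ℕ).sum + 1 - x = 2*(a+b)+1-x := by rw [hsum]
      rw [h, zt_low_cast a b x hx2]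
  · rintro (h | h)
    · left
      have hc := zt_up_cast a b x hx1 hx2
      obtain ⟨hu1, hu2⟩ := zt_up_mem a b x hx1 hx2
      exact zt_cast_inj hy1 hy2 hu1 hu2 (h.trans hc.symm)
    · right
      have hL := zt_low_cast a b x hx2
      have h2 : y = 2*(a+b)+1-x := zt_cast_inj hy1 hy2 (by omega) (by omega) (h.trans hL.symm)
      rw [hsum]; omega

lemma zt_shift (z : ZMod (2*(a+b))) :
    Relation.EqvGen (ztR a b) z (z + ((2*a:ℕ) : ZMod (2*(a+b)))) := by
  have h1 : Relation.EqvGen (ztR a b) z (1 - z) := Relation.EqvGen.rel _ _ (Or.inr rfl)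
  have h2 : Relation.EqvGen (ztR a b) (1-z) (((2*a+1:ℕ) : ZMod (2*(a+b))) - (1-z)) :=
    Relation.EqvGen.rel _ _ (Or.inl rfl)
  have h3 : ((2*a+1:ℕ) : ZMod (2*(a+b))) - (1-z) = z + ((2*a:ℕ) : ZMod (2*(a+b))) := by
    push_cast; ring
  exact Relation.EqvGen.trans _ _ _ h1 (h3 ▸ h2)

lemma zt_shift_int (z : ZMod (2*(a+b))) (s : ℤ) :
    Relation.EqvGen (ztR a b) z (z + ((2*a:ℕ) : ZMod (2*(a+b))) * ((s:ℤ) : ZMod (2*(a+b)))) := by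
  induction s using Int.induction_on with
  | zero => simpa using Relation.EqvGen.refl z
  | succ i ih =>
      have h2 := Relation.EqvGen.trans _ _ _ ih (zt_shift a b _)
      have he : (z + ((2*a:ℕ):ZMod (2*(a+b))) * ((i:ℤ) : ZMod (2*(a+b)))) + ((2*a:ℕ):ZMod (2*(a+b)))
          = z + ((2*a:ℕ):ZMod (2*(a+b))) * (((i:ℤ)+1 : ℤ) : ZMod (2*(a+b))) := by
        push_cast; ring
      exact he ▸ h2
  | pred i ih =>
      have hs := zt_shift a b (z + ((2*a:ℕ):ZMod (2*(a+b))) * ((-(i:ℤ)-1 : ℤ) : ZMod (2*(a+b))))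
      have he : (z + ((2*a:ℕ):ZMod (2*(a+b))) * ((-(i:ℤ)-1 : ℤ) : ZMod (2*(a+b)))) + ((2*a:ℕ):ZMod (2*(a+b)))
          = z + ((2*a:ℕ):ZMod (2*(a+b))) * ((-(i:ℤ) : ℤ) : ZMod (2*(a+b))) := by
        push_cast; ring
      exact Relation.EqvGen.trans _ _ _ ih (Relation.EqvGen.symm _ _ (he ▸ hs))

lemma zt_shift_gcd (z : ZMod (2*(a+b))) :
    Relation.EqvGen (ztR a b) z (z + ((2*Nat.gcd a b : ℕ) : ZMod (2*(a+b)))) := by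
  have hd : Nat.gcd (2*a) (2*(a+b)) = 2 * Nat.gcd a b := by
    rw [Nat.gcd_mul_left]
    congr 1
    rw [Nat.add_comm, Nat.gcd_add_self_right]
  have hbez := Nat.gcd_eq_gcd_ab (2*a) (2*(a+b))
  rw [hd] at hbez
  have hcast : ((2*Nat.gcd a b : ℕ) : ZMod (2*(a+b)))
      = ((2*a:ℕ):ZMod (2*(a+b))) * ((Nat.gcdA (2*a) (2*(a+b)) : ℤ) : ZMod (2*(a+b))) := by
    have h := congrArg (fun t : ℤ => ((t:ℤ) : ZMod (2*(a+b)))) hbez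
    have hn : ((2*(a+b) : ℕ) : ZMod (2*(a+b))) = 0 := ZMod.natCast_self _
    push_cast at h hn ⊢
    linear_combination h + ((Nat.gcdB (2*a) (2*(a+b)) : ℤ) : ZMod (2*(a+b))) * hn
  rw [hcast]
  exact zt_shift_int a b z _

lemma zt_shift_gcd_nat (z : ZMod (2*(a+b))) (k : ℕ) :
    Relation.EqvGen (ztR a b) z
      (z + ((2*Nat.gcd a b:ℕ):ZMod (2*(a+b))) * ((k:ℕ) : ZMod (2*(a+b)))) := by
  induction k with
  | zero => simpa using Relation.EqvGen.refl z
  | succ k ih =>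
      have h2 := Relation.EqvGen.trans _ _ _ ih (zt_shift_gcd a b _)
      have he : (z + ((2*Nat.gcd a b:ℕ):ZMod (2*(a+b))) * ((k:ℕ) : ZMod (2*(a+b))))
            + ((2*Nat.gcd a b:ℕ):ZMod (2*(a+b)))
          = z + ((2*Nat.gcd a b:ℕ):ZMod (2*(a+b))) * ((k+1:ℕ) : ZMod (2*(a+b))) := by
        push_cast; ring
      exact he ▸ h2

lemma zt_dvd : 2*Nat.gcd a b ∣ 2*(a+b) :=
  mul_dvd_mul_left 2 (Nat.dvd_add (Nat.gcd_dvd_left a b) (Nat.gcd_dvd_right a b))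

def ztq : ZMod (2*(a+b)) →+* ZMod (2*Nat.gcd a b) := ZMod.castHom (zt_dvd a b) _

lemma zt_cast2a : ((2*a:ℕ) : ZMod (2*Nat.gcd a b)) = 0 := by
  obtain ⟨c, hc⟩ := Nat.gcd_dvd_left a b
  have h2a : 2*a = 2*Nat.gcd a b*c := by conv_lhs => rw [hc, ← Nat.mul_assoc]
  rw [h2a, Nat.cast_mul, ZMod.natCast_self, zero_mul]

lemma zt_forward (x y : ZMod (2*(a+b))) (h : Relation.EqvGen (ztR a b) x y) :
    ztq a b x = ztq a b y ∨ ztq a b x + ztq a b y = 1 := by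
  induction h with
  | rel u v huv =>
      rcases huv with rfl | rfl
      · right
        rw [map_sub, map_natCast]
        have h0 := zt_cast2a a b
        push_cast at h0 ⊢
        linear_combination h0
      · right
        rw [map_sub, map_one]
        ring
  | refl u => exact Or.inl rfl
  | symm u v _ ih =>
      rcases ih with h | h
      · exact Or.inl h.symm
      · exact Or.inr (by linear_combination h)
  | trans u v w _ _ ih1 ih2 =>
      rcases ih1 with h1 | h1 <;> rcases ih2 with h2 | h2
      · exact Or.inl (h1.trans h2)
      · exact Or.inr (by rw [h1]; exact h2)
      · exact Or.inr (by rw [← h2]; exact h1)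
      · exact Or.inl (by linear_combination h1 - h2)

lemma zt_backward (ha : 0 < a) (hb : 0 < b) (x y : ZMod (2*(a+b)))
    (h : ztq a b x = ztq a b y ∨ ztq a b x + ztq a b y = 1) :
    Relation.EqvGen (ztR a b) x y := by
  have hg : 0 < Nat.gcd a b := Nat.gcd_pos_of_pos_left b ha
  haveI : NeZero (2*(a+b)) := ⟨by omega⟩
  haveI : NeZero (2*Nat.gcd a b) := ⟨by omega⟩
  have key : ∀ u v : ZMod (2*(a+b)), ztq a b u = ztq a b v → Relation.EqvGen (ztR a b) u v := by
    intro u v huv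
    have h0 : ztq a b (v - u) = 0 := by rw [map_sub, huv, sub_self]
    have h1 : (((v-u).val : ℕ) : ZMod (2*(a+b))) = v - u := ZMod.natCast_rightInverse _
    have h2 : (((v-u).val : ℕ) : ZMod (2*Nat.gcd a b)) = 0 := by
      rw [← map_natCast (ztq a b), h1, h0]
    have h3 : 2*Nat.gcd a b ∣ (v-u).val := (ZMod.natCast_eq_zero_iff _ _).mp h2
    obtain ⟨c, hc⟩ := h3
    have h4 : v = u + ((2*Nat.gcd a b : ℕ) : ZMod (2*(a+b))) * ((c:ℕ) : ZMod (2*(a+b))) := by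
      have h5 : ((2*Nat.gcd a b:ℕ):ZMod (2*(a+b))) * ((c:ℕ):ZMod (2*(a+b))) = v - u := by
        rw [← Nat.cast_mul, ← hc, h1]
      rw [h5]; ring
    exact h4 ▸ zt_shift_gcd_nat a b u c
  rcases h with h | h
  · exact key x y h
  · have h1 : Relation.EqvGen (ztR a b) x (1 - x) := Relation.EqvGen.rel _ _ (Or.inr rfl)
    have h2 : ztq a b (1 - x) = ztq a b y := by
      rw [map_sub, map_one]; linear_combination -h
    exact Relation.EqvGen.trans _ _ _ h1 (key _ _ h2)

end Aux

theorem Z_two (a b : ℕ) (ha : 0 < a) (hb : 0 < b) : Z [a, b] = Nat.gcd a b := by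
  classical
  have hg : 0 < Nat.gcd a b := Nat.gcd_pos_of_pos_left b ha
  haveI : NeZero (2*(a+b)) := ⟨by omega⟩
  haveI : NeZero (2*Nat.gcd a b) := ⟨by omega⟩
  have hsum : 2 * ([a,b] : List ℕ).sum = 2*(a+b) := by simp
  set S2 : Setoid (ZMod (2*(a+b))) :=
    ⟨Relation.EqvGen (ztR a b), Relation.EqvGen.is_equivalence _⟩ with hS2
  -- the equivalence between the points and ZMod (2*(a+b))
  have hbij : Function.Bijective
      (fun k : {k : ℕ // 1 ≤ k ∧ k ≤ 2 * ([a,b] : List ℕ).sum} => ((k.1 : ℕ) : ZMod (2*(a+b)))) := by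
    constructor
    · intro j k h
      have hj := j.2; have hk := k.2
      exact Subtype.ext (zt_cast_inj j.2.1 (by omega) k.2.1 (by omega) h)
    · intro x
      by_cases hx : x.val = 0
      · refine ⟨⟨2*(a+b), by constructor <;> omega⟩, ?_⟩
        show ((2*(a+b) : ℕ) : ZMod (2*(a+b))) = x
        rw [ZMod.natCast_self]
        exact ((ZMod.val_eq_zero x).mp hx).symm
      · have hvlt := ZMod.val_lt x
        refine ⟨⟨x.val, by constructor <;> omega⟩, ?_⟩
        exact ZMod.natCast_rightInverse x
  set e := Equiv.ofBijective _ hbij with he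
  have hrel : ∀ p q : {k : ℕ // 1 ≤ k ∧ k ≤ 2 * ([a,b] : List ℕ).sum},
      (meanderSetoid [a,b]).r p q ↔ S2.r (e p) (e q) := by
    intro p q
    show Relation.EqvGen _ p q ↔ Relation.EqvGen (ztR a b) (p.1 : ZMod (2*(a+b))) (q.1 : ZMod (2*(a+b)))
    constructor
    · intro h
      induction h with
      | rel u v huv =>
          have hu := u.2; have hv := v.2
          exact Relation.EqvGen.rel _ _
            ((zt_rel_iff a b u.1 v.1 u.2.1 (by omega) v.2.1 (by omega)).mp huv)
      | refl u => exact Relation.EqvGen.refl _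
      | symm u v _ ih => exact Relation.EqvGen.symm _ _ ih
      | trans u v w _ _ ih1 ih2 => exact Relation.EqvGen.trans _ _ _ ih1 ih2
    · intro h
      have key : ∀ x y : ZMod (2*(a+b)), Relation.EqvGen (ztR a b) x y →
          Relation.EqvGen (fun u v : {k : ℕ // 1 ≤ k ∧ k ≤ 2 * ([a,b] : List ℕ).sum} =>
            meanderRel [a,b] u.1 v.1) (e.symm x) (e.symm y) := by
        intro x y hxy
        induction hxy with
        | rel u v huv =>
            have hu : (((e.symm u).1 : ℕ) : ZMod (2*(a+b))) = u := e.apply_symm_apply u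
            have hv : (((e.symm v).1 : ℕ) : ZMod (2*(a+b))) = v := e.apply_symm_apply v
            have hub := (e.symm u).2; have hvb := (e.symm v).2
            refine Relation.EqvGen.rel _ _ ?_
            apply (zt_rel_iff a b _ _ (e.symm u).2.1 (by omega) (e.symm v).2.1 (by omega)).mpr
            rw [hu, hv]; exact huv
        | refl u => exact Relation.EqvGen.refl _
        | symm u v _ ih => exact Relation.EqvGen.symm _ _ ih
        | trans u v w _ _ ih1 ih2 => exact Relation.EqvGen.trans _ _ _ ih1 ih2
      have h2 := key _ _ h
      have hp : e.symm ((p.1 : ℕ) : ZMod (2*(a+b))) = p := e.symm_apply_apply p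
      have hq : e.symm ((q.1 : ℕ) : ZMod (2*(a+b))) = q := e.symm_apply_apply q
      rwa [hp, hq] at h2
  set E1 : Quotient (meanderSetoid [a,b]) ≃ Quotient S2 := Quotient.congr e hrel with hE1
  -- the bijection Fin g ≃ Quotient S2
  have hφbij : Function.Bijective
      (fun j : Fin (Nat.gcd a b) => Quotient.mk S2 (((j.1+1 : ℕ) : ZMod (2*(a+b))))) := by
    constructor
    · intro j j' hjj
      have hE : Relation.EqvGen (ztR a b) ((j.1+1 : ℕ) : ZMod (2*(a+b))) ((j'.1+1 : ℕ) : ZMod (2*(a+b))) :=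
        Quotient.exact hjj
      have hP := zt_forward a b _ _ hE
      rw [map_natCast, map_natCast] at hP
      have hjb := j.2; have hjb' := j'.2
      rcases hP with h | h
      · have h2 : (j.1+1) % (2*Nat.gcd a b) = (j'.1+1) % (2*Nat.gcd a b) :=
          (ZMod.natCast_eq_natCast_iff _ _ _).mp h
        rw [Nat.mod_eq_of_lt (by omega), Nat.mod_eq_of_lt (by omega)] at h2
        exact Fin.ext (by omega)
      · have h1 : ((j.1+1 : ℕ) : ZMod (2*Nat.gcd a b)) + ((j'.1+1:ℕ) : ZMod (2*Nat.gcd a b))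
            = ((j.1+j'.1+2 : ℕ) : ZMod (2*Nat.gcd a b)) := by push_cast; ring
        rw [h1] at h
        have h2 : ((j.1+j'.1+2 : ℕ) : ZMod (2*Nat.gcd a b)) = ((1:ℕ) : ZMod (2*Nat.gcd a b)) := by
          rw [h]; simp
        have h3 : (j.1+j'.1+2) % (2*Nat.gcd a b) = 1 % (2*Nat.gcd a b) :=
          (ZMod.natCast_eq_natCast_iff _ _ _).mp h2
        rw [Nat.mod_eq_of_lt (show (1:ℕ) < 2*Nat.gcd a b by omega)] at h3
        rcases lt_or_eq_of_le (show j.1+j'.1+2 ≤ 2*Nat.gcd a b by omega) with hlt | heq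
        · rw [Nat.mod_eq_of_lt hlt] at h3; omega
        · rw [heq, Nat.mod_self] at h3; omega
    · intro c
      refine Quotient.inductionOn c ?_
      intro x
      have hvlt : (ztq a b x).val < 2*Nat.gcd a b := ZMod.val_lt _
      have hvx : (((ztq a b x).val : ℕ) : ZMod (2*Nat.gcd a b)) = ztq a b x :=
        ZMod.natCast_rightInverse _
      set v := (ztq a b x).val with hv
      by_cases h0 : v = 0
      · refine ⟨⟨0, hg⟩, Quotient.sound (zt_backward a b ha hb _ _ ?_)⟩
        right
        rw [map_natCast]
        have hx0 : ztq a b x = 0 := by rw [← hvx, h0]; simp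
        rw [hx0]
        norm_num
      · by_cases h1 : v ≤ Nat.gcd a b
        · refine ⟨⟨v-1, by omega⟩, Quotient.sound (zt_backward a b ha hb _ _ ?_)⟩
          left
          rw [map_natCast, show v - 1 + 1 = v from by omega, hvx]
        · refine ⟨⟨2*Nat.gcd a b - v, by omega⟩, Quotient.sound (zt_backward a b ha hb _ _ ?_)⟩
          right
          rw [map_natCast]
          have h2 : (2*Nat.gcd a b - v + 1) + v = 2*Nat.gcd a b + 1 := by omega
          calc ((2*Nat.gcd a b - v + 1 : ℕ) : ZMod (2*Nat.gcd a b)) + ztq a b x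
              = ((2*Nat.gcd a b - v + 1 : ℕ) : ZMod (2*Nat.gcd a b)) + ((v:ℕ) : ZMod (2*Nat.gcd a b)) := by
                rw [hvx]
            _ = ((2*Nat.gcd a b + 1 : ℕ) : ZMod (2*Nat.gcd a b)) := by rw [← Nat.cast_add, h2]
            _ = 1 := by rw [Nat.cast_add, ZMod.natCast_self, zero_add, Nat.cast_one]
  set E2 := Equiv.ofBijective _ hφbij with hE2
  calc Z [a,b] = Nat.card (Quotient S2) := Nat.card_congr E1
    _ = Nat.card (Fin (Nat.gcd a b)) := (Nat.card_congr E2).symm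
    _ = Nat.gcd a b := by simp
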